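/- Let T be the total progeny of a Galton–Watson branching process with offspring distribution Poisson(γ) for 0 < γ ≤ 1. Then P(|T| = t) = t^{t-1} (γ e^{-γ})^t / (γ · t!) for every integer t ≥ 1. -/

import Mathlib

open MeasureTheory Finset

namespace BorelAux

def gpred (t : ℕ) (k : ℕ → ℕ) : Prop :=
  ∀ s ∈ Finset.range t, 1 ≤ s → s ≤ ∑ i ∈ Finset.range s, k i

instance gpred.dec (t : ℕ) (k : ℕ → ℕ) : Decidable (gpred t k) := by
  unfold gpred; infer_instance

def rotN (t j : ℕ) (m : ℕ → ℕ) : ℕ → ℕ := fun i => if i < t then m ((i + j) % t) else 0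
lemma ne_iff_gpred (t : ℕ) (g : ℕ → ℕ) :
    (∀ s, 1 ≤ s → s < t → ∑ i ∈ range s, g i ≠ s - 1) ↔ gpred t g := by
  constructor
  · intro h
    have key : ∀ s, s < t → s ≤ ∑ i ∈ range s, g i := by
      intro s
      induction s with
      | zero => simp
      | succ n ih =>
        intro hlt
        have h1 : n ≤ ∑ i ∈ range n, g i := ih (by omega)
        have h2 : ∑ i ∈ range (n+1), g i = ∑ i ∈ range n, g i + g n :=
          Finset.sum_range_succ g n
        have h3 := h (n+1) (by omega) hlt
        omega
    intro s hs _h1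
    exact key s (mem_range.mp hs)
  · intro h s hs1 hst heq
    have := h s (mem_range.mpr hst) hs1
    omega




lemma mod_rot_cancel {t j a : ℕ} (ht : 0 < t) (hj : j ≤ t) (ha : a < t) :
    ((a + j) % t + (t - j)) % t = a := by
  rw [Nat.mod_add_mod, add_assoc, Nat.add_sub_cancel' hj, Nat.add_mod_right,
    Nat.mod_eq_of_lt ha]

lemma mod_rot_cancel' {t j a : ℕ} (ht : 0 < t) (hj : j ≤ t) (ha : a < t) :
    ((a + (t - j)) % t + j) % t = a := by
  rw [Nat.mod_add_mod, add_assoc, Nat.sub_add_cancel hj, Nat.add_mod_right,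
    Nat.mod_eq_of_lt ha]

lemma prod_mod_rot {M : Type*} [CommMonoid M] (t j : ℕ) (ht : 0 < t) (hj : j ≤ t)
    (g : ℕ → M) : ∏ i ∈ range t, g ((i + j) % t) = ∏ i ∈ range t, g i := by
  refine Finset.prod_nbij' (fun i => (i + j) % t) (fun i => (i + (t - j)) % t) ?_ ?_ ?_ ?_ ?_
  · intro a _; exact mem_range.mpr (Nat.mod_lt _ ht)
  · intro a _; exact mem_range.mpr (Nat.mod_lt _ ht)
  · intro a ha; exact mod_rot_cancel ht hj (mem_range.mp ha)
  · intro a ha; exact mod_rot_cancel' ht hj (mem_range.mp ha)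
  · intro a _; rfl

lemma sum_mod_rot {M : Type*} [AddCommMonoid M] (t j : ℕ) (ht : 0 < t) (hj : j ≤ t)
    (g : ℕ → M) : ∑ i ∈ range t, g ((i + j) % t) = ∑ i ∈ range t, g i :=
  prod_mod_rot (M := Multiplicative M) t j ht hj g

lemma sum_rotN (t j : ℕ) (ht : 0 < t) (hj : j ≤ t) (m : ℕ → ℕ) :
    ∑ i ∈ range t, rotN t j m i = ∑ i ∈ range t, m i := by
  have h1 : ∑ i ∈ range t, rotN t j m i = ∑ i ∈ range t, m ((i + j) % t) :=
    Finset.sum_congr rfl (fun i hi => by simp only [rotN, if_pos (mem_range.mp hi)])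
  rw [h1]; exact sum_mod_rot t j ht hj m

lemma prod_rotN {M : Type*} [CommMonoid M] (t j : ℕ) (ht : 0 < t) (hj : j ≤ t)
    (f : ℕ → M) (m : ℕ → ℕ) :
    ∏ i ∈ range t, f (rotN t j m i) = ∏ i ∈ range t, f (m i) := by
  have h1 : ∏ i ∈ range t, f (rotN t j m i) = ∏ i ∈ range t, f (m ((i + j) % t)) :=
    Finset.prod_congr rfl (fun i hi => by simp only [rotN, if_pos (mem_range.mp hi)])
  rw [h1]; exact prod_mod_rot t j ht hj (fun x => f (m x))

lemma rotN_rotN (t j : ℕ) (ht : 0 < t) (hj : j ≤ t) (m : ℕ → ℕ)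
    (hm : ∀ i, t ≤ i → m i = 0) :
    rotN t (t - j) (rotN t j m) = m := by
  funext i
  by_cases hi : i < t
  · simp only [rotN, if_pos hi, if_pos (Nat.mod_lt _ ht)]
    rw [mod_rot_cancel' ht hj hi]
  · simp only [rotN, if_neg hi]
    exact (hm i (le_of_not_gt hi)).symm


lemma rotN_rotN' (t j : ℕ) (ht : 0 < t) (hj : j ≤ t) (m : ℕ → ℕ)
    (hm : ∀ i, t ≤ i → m i = 0) :
    rotN t j (rotN t (t - j) m) = m := by
  have := rotN_rotN t (t - j) ht (Nat.sub_le t j) m hm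
  rwa [Nat.sub_sub_self hj] at this





lemma rot_partial_low (t j s : ℕ) (m : ℕ → ℕ) (hjs : j + s ≤ t) :
    ∑ i ∈ range s, rotN t j m i = ∑ i ∈ Ico j (j + s), m i := by
  rw [Finset.sum_Ico_eq_sum_range]
  simp only [Nat.add_sub_cancel_left]
  refine Finset.sum_congr rfl (fun i hi => ?_)
  have hi' : i < s := mem_range.mp hi
  have h1 : i + j < t := by omega
  simp only [rotN, if_pos (show i < t by omega)]
  rw [Nat.mod_eq_of_lt h1]
  congr 1
  omega

lemma rot_partial_high (t j s : ℕ) (m : ℕ → ℕ) (hj : j ≤ t) (h1 : t - j ≤ s)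
    (hs : s ≤ t) (hjt : 0 < j) :
    ∑ i ∈ range s, rotN t j m i
      = ∑ i ∈ Ico j t, m i + ∑ i ∈ range (s - (t - j)), m i := by
  have h0 : 0 < t := by omega
  rw [Finset.range_eq_Ico, ← Finset.sum_Ico_consecutive _ (Nat.zero_le (t - j)) h1,
    ← Finset.range_eq_Ico]
  congr 1
  · rw [rot_partial_low t j (t - j) m (by omega)]
    have hjt' : j + (t - j) = t := by omega
    rw [hjt']
  · rw [Finset.sum_Ico_eq_sum_range]
    refine Finset.sum_congr rfl (fun i hi => ?_)
    have hi' : i < s - (t - j) := mem_range.mp hi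
    have hlt : t - j + i < t := by omega
    have hge : t ≤ t - j + i + j := by omega
    have hlt2 : t - j + i + j - t < t := by omega
    simp only [rotN, if_pos hlt]
    rw [Nat.mod_eq_sub_mod hge, Nat.mod_eq_of_lt hlt2]
    congr 1
    omega

section Cycle

variable (t : ℕ) (m : ℕ → ℕ)

/-- The walk `W s = (∑_{i<s} m i) - s`. -/
def W (s : ℕ) : ℤ := (∑ i ∈ range s, m i : ℕ) - s

/-- `Cond t m j` : `j` is the first minimizer of `W` on `[0, t)`. -/
def Cond (j : ℕ) : Prop :=
  (∀ u, j ≤ u → u < t → W m j ≤ W m u) ∧ (∀ v, v < j → W m j + 1 ≤ W m v)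

lemma good_iff_cond (ht : 1 ≤ t) (hsum : ∑ i ∈ range t, m i = t - 1)
    (j : ℕ) (hj : j < t) :
    gpred t (rotN t j m) ↔ Cond t m j := by
  have hW0 : W m 0 = 0 := by simp [W]
  have hWt : W m t = -1 := by
    simp only [W, hsum]
    omega
  have hlow : ∀ s : ℕ, 1 ≤ s → s ≤ t - j →
      ((s : ℕ) ≤ ∑ i ∈ range s, rotN t j m i ↔ W m j ≤ W m (j + s)) := by
    intro s hs1 hs2
    rw [rot_partial_low t j s m (by omega)]
    have hsplit : ∑ i ∈ range (j + s), m i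
        = ∑ i ∈ range j, m i + ∑ i ∈ Ico j (j + s), m i := by
      rw [Finset.range_eq_Ico, ← Finset.sum_Ico_consecutive _ (Nat.zero_le j) (by omega),
        ← Finset.range_eq_Ico]
    simp only [W]
    constructor <;> intro h <;> omega
  have hhigh : ∀ s : ℕ, t - j < s → s < t → 0 < j →
      ((s : ℕ) ≤ ∑ i ∈ range s, rotN t j m i ↔ W m j + 1 ≤ W m (s - (t - j))) := by
    intro s hs1 hs2 hj0
    rw [rot_partial_high t j s m (by omega) (by omega) (by omega) hj0]
    have htot : ∑ i ∈ range j, m i + ∑ i ∈ Ico j t, m i = t - 1 := by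
      rw [Finset.range_eq_Ico, Finset.sum_Ico_consecutive _ (Nat.zero_le j) (by omega),
        ← Finset.range_eq_Ico, hsum]
    simp only [W]
    constructor <;> intro h <;> omega
  constructor
  · intro hg
    constructor
    · intro u hju hut
      rcases eq_or_lt_of_le hju with rfl | hlt
      · exact le_refl _
      · have := hg (u - j) (mem_range.mpr (by omega)) (by omega)
        rw [hlow (u - j) (by omega) (by omega)] at this
        rwa [Nat.add_sub_cancel' hju] at this
    · intro v hv
      have hj0 : 0 < j := by omega
      rcases Nat.eq_zero_or_pos v with rfl | hv0
      · have := hg (t - j) (mem_range.mpr (by omega)) (by omega)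
        rw [hlow (t - j) (by omega) (le_refl _)] at this
        rw [Nat.add_sub_cancel' (by omega : j ≤ t), hWt] at this
        rw [hW0]; omega
      · have := hg (v + t - j) (mem_range.mpr (by omega)) (by omega)
        rw [hhigh (v + t - j) (by omega) (by omega) hj0] at this
        have hveq : v + t - j - (t - j) = v := by omega
        rwa [hveq] at this
  · rintro ⟨h1, h2⟩ s hs hs1
    have hst : s < t := mem_range.mp hs
    rcases le_or_gt s (t - j) with hcase | hcase
    · rw [hlow s hs1 hcase]
      rcases lt_or_ge (j + s) t with hlt | hge
      · exact h1 (j + s) (by omega) hlt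
      · have hjs : j + s = t := by omega
        have hj0 : 0 < j := by omega
        have := h2 0 hj0
        rw [hW0] at this
        rw [hjs, hWt]
        omega
    · have hj0 : 0 < j := by omega
      rw [hhigh s hcase hst hj0]
      exact h2 (s - (t - j)) (by omega)

lemma cond_exists_unique (ht : 1 ≤ t) : ∃! j, j < t ∧ Cond t m j := by
  have hne : ∃ u, u < t ∧ ∀ u', u' < t → W m u ≤ W m u' := by
    obtain ⟨u, hu, hmin⟩ := Finset.exists_min_image (range t) (W m)
      ⟨0, mem_range.mpr (by omega)⟩
    exact ⟨u, mem_range.mp hu, fun u' hu' => hmin u' (mem_range.mpr hu')⟩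
  classical
  set j := Nat.find hne with hjdef
  obtain ⟨hjt, hjmin⟩ := Nat.find_spec hne
  have hcond : Cond t m j := by
    refine ⟨fun u _ hu => hjmin u hu, fun v hv => ?_⟩
    have hvt : v < t := by omega
    have hmin' := Nat.find_min hne hv
    push_neg at hmin'
    obtain ⟨u, hut, hlt⟩ := hmin' hvt
    have hju := hjmin u hut
    have : W m j ≤ W m u := hju
    have h2 : W m u < W m v := hlt
    omega
  refine ⟨j, ⟨hjt, hcond⟩, ?_⟩
  rintro j' ⟨hj't, h1', h2'⟩
  by_contra hne'
  rcases lt_or_gt_of_ne hne' with hlt | hlt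
  · have hA := hcond.2 j' hlt
    have hB := h1' j (le_of_lt hlt) hjt
    omega
  · have hA := h2' j hlt
    have hB := hcond.1 j' (le_of_lt hlt) hj't
    omega

/-- The cycle lemma: exactly one rotation satisfies the path condition. -/
lemma cycle_exists_unique (ht : 1 ≤ t) (hsum : ∑ i ∈ range t, m i = t - 1) :
    ∃! j, j < t ∧ gpred t (rotN t j m) := by
  obtain ⟨j, ⟨hjt, hcond⟩, huniq⟩ := cond_exists_unique t m ht
  exact ⟨j, ⟨hjt, (good_iff_cond t m ht hsum j hjt).mpr hcond⟩,
    fun j' ⟨hj't, hg'⟩ => huniq j' ⟨hj't, (good_iff_cond t m ht hsum j' hj't).mp hg'⟩⟩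

end Cycle
lemma supp_of_mem {t n : ℕ} {m : ℕ → ℕ} (hm : m ∈ piAntidiag (range t) n) :
    ∀ i, t ≤ i → m i = 0 := by
  intro i hi
  by_contra h
  exact absurd (mem_range.mp ((mem_piAntidiag.mp hm).2 i h)) (by omega)

lemma cycle_count (t : ℕ) (ht : 1 ≤ t) (f : ℕ → ℝ) :
    ∑ m ∈ piAntidiag (range t) (t - 1), ∏ i ∈ range t, f (m i)
      = t * ∑ k ∈ (piAntidiag (range t) (t - 1)).filter (gpred t),
          ∏ i ∈ range t, f (k i) := by
  have h0 : 0 < t := ht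
  calc ∑ m ∈ piAntidiag (range t) (t - 1), ∏ i ∈ range t, f (m i)
      = ∑ m ∈ piAntidiag (range t) (t - 1), ∑ j ∈ range t,
          (if gpred t (rotN t j m) then ∏ i ∈ range t, f (m i) else 0) := by
        refine Finset.sum_congr rfl (fun m hm => ?_)
        obtain ⟨j₀, ⟨hj₀t, hg₀⟩, huniq⟩ :=
          cycle_exists_unique t m ht (mem_piAntidiag.mp hm).1
        rw [Finset.sum_eq_single j₀]
        · rw [if_pos hg₀]
        · intro b hb hbne
          rw [if_neg (fun hg => hbne (huniq b ⟨mem_range.mp hb, hg⟩))]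
        · intro hj₀
          exact absurd (mem_range.mpr hj₀t) hj₀
    _ = ∑ j ∈ range t, ∑ m ∈ piAntidiag (range t) (t - 1),
          (if gpred t (rotN t j m) then ∏ i ∈ range t, f (m i) else 0) :=
        Finset.sum_comm
    _ = ∑ _j ∈ range t, ∑ k ∈ (piAntidiag (range t) (t - 1)).filter (gpred t),
          ∏ i ∈ range t, f (k i) := by
        refine Finset.sum_congr rfl (fun j hj => ?_)
        have hjt : j ≤ t := le_of_lt (mem_range.mp hj)
        rw [← Finset.sum_filter]
        refine Finset.sum_nbij' (rotN t j) (rotN t (t - j)) ?_ ?_ ?_ ?_ ?_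
        · intro m hm
          rw [Finset.mem_filter] at hm ⊢
          obtain ⟨hmA, hmg⟩ := hm
          refine ⟨mem_piAntidiag.mpr ⟨?_, ?_⟩, hmg⟩
          · rw [sum_rotN t j h0 hjt]; exact (mem_piAntidiag.mp hmA).1
          · intro i hi
            by_contra hir
            exact hi (by simp [rotN, if_neg (fun h => hir (mem_range.mpr h))])
        · intro k hk
          rw [Finset.mem_filter] at hk ⊢
          obtain ⟨hkA, hkg⟩ := hk
          have hksupp := supp_of_mem hkA
          refine ⟨mem_piAntidiag.mpr ⟨?_, ?_⟩, ?_⟩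
          · rw [sum_rotN t (t - j) h0 (Nat.sub_le t j)]; exact (mem_piAntidiag.mp hkA).1
          · intro i hi
            by_contra hir
            exact hi (by simp [rotN, if_neg (fun h => hir (mem_range.mpr h))])
          · rw [rotN_rotN' t j h0 hjt k hksupp]; exact hkg
        · intro m hm
          exact rotN_rotN t j h0 hjt m (supp_of_mem (Finset.mem_filter.mp hm).1)
        · intro k hk
          exact rotN_rotN' t j h0 hjt k (supp_of_mem (Finset.mem_filter.mp hk).1)
        · intro m _
          exact (prod_rotN t j h0 hjt f m).symm
    _ = t * ∑ k ∈ (piAntidiag (range t) (t - 1)).filter (gpred t),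
          ∏ i ∈ range t, f (k i) := by
        rw [Finset.sum_const, Finset.card_range, nsmul_eq_mul]



lemma multinomial_eval (t : ℕ) (γ : ℝ) :
    ∑ k ∈ piAntidiag (range t) (t - 1), ∏ i ∈ range t, (γ ^ k i / (k i).factorial)
      = (t * γ) ^ (t - 1) / (t - 1).factorial := by
  have hpow := Finset.sum_pow_eq_sum_piAntidiag (range t) (fun _ => γ) (t - 1)
  simp only [Finset.sum_const, Finset.card_range, nsmul_eq_mul] at hpow
  rw [eq_div_iff (by positivity : ((t-1).factorial : ℝ) ≠ 0), hpow, Finset.sum_mul]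
  refine Finset.sum_congr rfl (fun k hk => ?_)
  obtain ⟨hsum, _⟩ := mem_piAntidiag.mp hk
  have hspec : (∏ i ∈ range t, (k i).factorial) * Nat.multinomial (range t) k
      = (t - 1).factorial := by rw [Nat.multinomial_spec, hsum]
  have hspec' : ((∏ i ∈ range t, (k i).factorial : ℕ) : ℝ) * (Nat.multinomial (range t) k : ℝ)
      = ((t - 1).factorial : ℝ) := by exact_mod_cast hspec
  have hprodfac : ((∏ i ∈ range t, (k i).factorial : ℕ) : ℝ) ≠ 0 := by positivity
  rw [Finset.prod_div_distrib]
  push_cast at hspec' hprodfac ⊢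
  rw [div_mul_eq_mul_div, div_eq_iff hprodfac]
  linear_combination -(∏ x ∈ range t, γ ^ k x) * hspec'


end BorelAux

open BorelAux


/-- Borel distribution of the total progeny of a Poisson(γ) Galton–Watson process:
if `X i` are the i.i.d. Poisson(γ) offspring numbers (explored in BFS order) and
`T = inf {t ≥ 1 : X₁ + ⋯ + X_t = t - 1}` is the total progeny, then
`P(T = t) = t^{t-1} (γ e^{-γ})^t / (γ t!)` for every `t ≥ 1`. -/
theorem borel_distribution {Ω : Type*} [MeasurableSpace Ω] (μ : Measure Ω)
    [IsProbabilityMeasure μ] (γ : ℝ) (hγ0 : 0 < γ) (hγ1 : γ ≤ 1)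
    (X : ℕ → Ω → ℕ) (hmeas : ∀ i, Measurable (X i))
    (hindep : ProbabilityTheory.iIndepFun X μ)
    (hdist : ∀ i k, μ {ω | X i ω = k} =
      ENNReal.ofReal (Real.exp (-γ) * γ ^ k / k.factorial))
    (T : Ω → ℕ)
    (hT : ∀ ω, T ω = sInf {t | 1 ≤ t ∧ ∑ i ∈ Finset.range t, X i ω = t - 1})
    (t : ℕ) (ht : 1 ≤ t) :
    μ {ω | T ω = t} =
      ENNReal.ofReal ((t : ℝ) ^ (t - 1) * (γ * Real.exp (-γ)) ^ t / (γ * t.factorial)) := by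
  classical
  have h0 : 0 < t := ht
  set p : ℕ → ℝ := fun k => Real.exp (-γ) * γ ^ k / k.factorial with hp
  set G : Finset (ℕ → ℕ) := (piAntidiag (range t) (t - 1)).filter (gpred t) with hG
  -- Step 1: characterize the event T = t
  have hTiff : ∀ ω, T ω = t ↔
      (∑ i ∈ range t, X i ω = t - 1 ∧ gpred t (fun i => X i ω)) := by
    intro ω
    rw [hT ω]
    set S : Set ℕ := {s | 1 ≤ s ∧ ∑ i ∈ Finset.range s, X i ω = s - 1} with hS
    constructor
    · intro h
      have hne : S.Nonempty := by
        by_contra hcon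
        rw [Set.not_nonempty_iff_eq_empty] at hcon
        rw [hcon, Nat.sInf_empty] at h
        omega
      have hmem := Nat.sInf_mem hne
      rw [h] at hmem
      refine ⟨hmem.2, (ne_iff_gpred t _).mp ?_⟩
      intro s hs1 hst heq
      have : t ≤ s := h ▸ Nat.sInf_le ⟨hs1, heq⟩
      omega
    · rintro ⟨hsum, hg⟩
      have htS : t ∈ S := ⟨ht, hsum⟩
      have hle : sInf S ≤ t := Nat.sInf_le htS
      rcases eq_or_lt_of_le hle with heq | hlt
      · exact heq
      · exfalso
        have hmem := Nat.sInf_mem ⟨t, htS⟩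
        exact (ne_iff_gpred t _).mpr hg (sInf S) hmem.1 hlt hmem.2
  -- Step 2: event as finite disjoint union
  have hset : {ω | T ω = t} = ⋃ k ∈ G, ⋂ i ∈ range t, X i ⁻¹' {k i} := by
    ext ω
    simp only [Set.mem_setOf_eq, Set.mem_iUnion, Set.mem_iInter, Set.mem_preimage,
      Set.mem_singleton_iff, hTiff ω, exists_prop]
    constructor
    · rintro ⟨hsum, hg⟩
      refine ⟨fun i => if i < t then X i ω else 0, ?_, ?_⟩
      · rw [hG, Finset.mem_filter]
        constructor
        · rw [mem_piAntidiag]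
          refine ⟨?_, fun i hi => mem_range.mpr ?_⟩
          · rw [Finset.sum_congr rfl (fun i hi => if_pos (mem_range.mp hi))]
            exact hsum
          · by_contra hcon
            exact hi (if_neg hcon)
        · intro s hs hs1
          rw [Finset.sum_congr rfl (fun i hi => if_pos (show i < t by
            have h1 := mem_range.mp hi; have h2 := mem_range.mp hs; omega))]
          exact hg s hs hs1
      · intro i hi
        exact (if_pos (mem_range.mp hi)).symm
    · rintro ⟨k, hkG, hkval⟩
      rw [hG, Finset.mem_filter] at hkG
      obtain ⟨hkA, hkg⟩ := hkG
      constructor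
      · rw [Finset.sum_congr rfl (fun i hi => hkval i hi)]
        exact (mem_piAntidiag.mp hkA).1
      · intro s hs hs1
        rw [Finset.sum_congr rfl (fun i hi => hkval i (mem_range.mpr (show i < t by
          have h1 := mem_range.mp hi; have h2 := mem_range.mp hs; omega)))]
        exact hkg s hs hs1
  -- Step 3: measure of the union
  have hdisj : (↑G : Set (ℕ → ℕ)).PairwiseDisjoint
      (fun k => ⋂ i ∈ range t, X i ⁻¹' {k i}) := by
    intro k hk k' hk' hne
    refine Set.disjoint_left.mpr (fun ω hω hω' => hne ?_)
    simp only [Set.mem_iInter, Set.mem_preimage, Set.mem_singleton_iff] at hω hω'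
    funext i
    rcases lt_or_ge i t with hi | hi
    · rw [← hω i (mem_range.mpr hi), ← hω' i (mem_range.mpr hi)]
    · rw [supp_of_mem (Finset.mem_filter.mp (Finset.mem_coe.mp hk)).1 i hi,
        supp_of_mem (Finset.mem_filter.mp (Finset.mem_coe.mp hk')).1 i hi]
  rw [hset, measure_biUnion_finset hdisj (fun k _ =>
    Finset.measurableSet_biInter _ (fun i _ => (hmeas i) (measurableSet_singleton _)))]
  -- Step 4: each term via independence
  have hterm : ∀ k ∈ G, μ (⋂ i ∈ range t, X i ⁻¹' {k i})
      = ENNReal.ofReal (∏ i ∈ range t, p (k i)) := by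
    intro k _
    rw [hindep.measure_inter_preimage_eq_mul (range t)
      (sets := fun i => {k i}) (fun i _ => measurableSet_singleton _)]
    rw [ENNReal.ofReal_prod_of_nonneg (fun i _ => by simp only [hp]; positivity)]
    refine Finset.prod_congr rfl (fun i _ => ?_)
    have hpre : X i ⁻¹' {k i} = {ω | X i ω = k i} := rfl
    rw [hpre, hdist i (k i)]
  rw [Finset.sum_congr rfl hterm, ← ENNReal.ofReal_sum_of_nonneg
    (fun k _ => Finset.prod_nonneg (fun i _ => by simp only [hp]; positivity))]
  -- Step 5: the real computation
  congr 1
  have hprod : ∀ m : ℕ → ℕ, ∏ i ∈ range t, p (m i)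
      = Real.exp (-γ) ^ t * ∏ i ∈ range t, (γ ^ m i / (m i).factorial) := by
    intro m
    calc ∏ i ∈ range t, p (m i)
        = ∏ i ∈ range t, (Real.exp (-γ) * (γ ^ m i / (m i).factorial)) :=
          Finset.prod_congr rfl (fun i _ => by simp only [hp]; ring)
      _ = (∏ _i ∈ range t, Real.exp (-γ)) * ∏ i ∈ range t, (γ ^ m i / (m i).factorial) :=
          Finset.prod_mul_distrib
      _ = Real.exp (-γ) ^ t * ∏ i ∈ range t, (γ ^ m i / (m i).factorial) := by
          rw [Finset.prod_const, Finset.card_range]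
  have key : (t : ℝ) * ∑ k ∈ G, ∏ i ∈ range t, p (k i)
      = Real.exp (-γ) ^ t * ((t * γ) ^ (t - 1) / (t - 1).factorial) := by
    rw [hG, ← cycle_count t ht (fun k => p k),
      Finset.sum_congr rfl (fun m _ => hprod m), ← Finset.mul_sum, multinomial_eval t γ]
  have htne : (t : ℝ) ≠ 0 := by positivity
  have hS : ∑ k ∈ G, ∏ i ∈ range t, p (k i)
      = Real.exp (-γ) ^ t * ((t * γ) ^ (t - 1) / (t - 1).factorial) / t := by
    rw [← key, mul_comm ((t:ℝ)) _, mul_div_assoc, div_self htne, mul_one]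
  rw [hS]
  have hfac : (t.factorial : ℝ) = t * ((t - 1).factorial : ℝ) := by
    exact_mod_cast (Nat.mul_factorial_pred h0.ne').symm
  have hγt : γ ^ t = γ * γ ^ (t - 1) := by
    conv_lhs => rw [show t = (t - 1) + 1 by omega]
    rw [pow_succ']
  have hfne : ((t - 1).factorial : ℝ) ≠ 0 := by positivity
  have hγne : γ ≠ 0 := ne_of_gt hγ0
  rw [mul_pow, mul_pow, hγt, hfac]
  field_simp
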